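/- arXiv:1705.00412 — 3 statements merged into one kernel-verified Lean document; each statement's English description precedes it below -/
import Mathlib

section
/- Claim 2 (coefficient identities for Step 1): Define d̂_i := ∑_{S ⊆ {1,…,K}} ĉ(i,S) and ê_i := ∑_{k=1}^{K} ∑_{S ⊆ {1,…,K} : i ∈ S} ĉ(k,S). Then d̂_i = d_i for every i ∈ {1,…,K}, ê_m = d_m (which equals min(d_m, e_m)), and ê_{m'} = e_{m'} for every m' ≠ m. -/
lemma ins_bij {K : ℕ} (m : Fin K) (p : Finset (Fin K) → Prop) [DecidablePred p]
    (hp : ∀ S, m ∉ S → (p (insert m S) ↔ p S)) (f : Finset (Fin K) → ℕ) :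
    ∑ S ∈ Finset.univ.filter (fun S => m ∉ S ∧ p S), f (insert m S)
      = ∑ S ∈ Finset.univ.filter (fun S => m ∈ S ∧ p S), f S := by
  apply Finset.sum_nbij' (fun S => insert m S) (fun S => S.erase m)
  · intro S hS
    simp only [Finset.mem_filter, Finset.mem_univ, true_and] at hS ⊢
    exact ⟨Finset.mem_insert_self _ _, (hp S hS.1).2 hS.2⟩
  · intro S hS
    simp only [Finset.mem_filter, Finset.mem_univ, true_and] at hS ⊢
    refine ⟨Finset.notMem_erase _ _, ?_⟩
    rw [← hp _ (Finset.notMem_erase _ _), Finset.insert_erase hS.1]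
    exact hS.2
  · intro S hS
    simp only [Finset.mem_filter, Finset.mem_univ, true_and] at hS
    exact Finset.erase_insert hS.1
  · intro S hS
    simp only [Finset.mem_filter, Finset.mem_univ, true_and] at hS
    exact Finset.insert_erase hS.1
  · intro S hS; rfl

/-- Claim 2, coefficient identities for Step 1. -/
theorem claim2_coefficient_identities
    {K : ℕ} (hK : 2 ≤ K) (c : Fin K → Finset (Fin K) → ℕ)
    (d e : Fin K → ℕ)
    (hd : ∀ i, d i = ∑ S : Finset (Fin K), c i S)
    (he : ∀ i, e i = ∑ k : Fin K,
      ∑ S ∈ Finset.univ.filter (fun S : Finset (Fin K) => i ∈ S), c k S)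
    (m : Fin K) (hm : d m ≤ e m)
    (β : Fin K → Finset (Fin K) → ℕ)
    (hβle : ∀ i S, β i S ≤ c i S)
    (hβ0 : ∀ i S, ¬(i ≠ m ∧ m ∈ S) → β i S = 0)
    (hβsum : (∑ i : Fin K, ∑ S : Finset (Fin K), β i S) = e m - d m)
    (chat : Fin K → Finset (Fin K) → ℕ)
    (hchat : ∀ i S, chat i S =
      if i = m then c i S
      else if m ∈ S then c i S - β i S
      else c i S + β i (insert m S))
    (dhat ehat : Fin K → ℕ)
    (hdhat : ∀ i, dhat i = ∑ S : Finset (Fin K), chat i S)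
    (hehat : ∀ i, ehat i = ∑ k : Fin K,
      ∑ S ∈ Finset.univ.filter (fun S : Finset (Fin K) => i ∈ S), chat k S) :
    (∀ i, dhat i = d i) ∧ ehat m = min (d m) (e m) ∧
      (∀ m', m' ≠ m → ehat m' = e m') := by
  -- the unified form of chat: valid for all i since β m S = 0
  have hchat' : ∀ i S, chat i S =
      if m ∈ S then c i S - β i S else c i S + β i (insert m S) := by
    intro i S
    rw [hchat]
    by_cases hi : i = m
    · have h1 : β i S = 0 := hβ0 i S (by simp [hi])
      have h2 : β i (insert m S) = 0 := hβ0 i (insert m S) (by simp [hi])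
      rw [hi] at h1 h2
      simp [hi, h1, h2]
    · simp [hi]
  have hβzero : ∀ i S, m ∉ S → β i S = 0 := fun i S h =>
    hβ0 i S (by tauto)
  constructor
  · -- dhat = d
    intro i
    rw [hdhat, hd]
    rw [← Finset.sum_filter_add_sum_filter_not Finset.univ (fun S => m ∈ S) (chat i),
        ← Finset.sum_filter_add_sum_filter_not Finset.univ (fun S => m ∈ S) (c i)]
    have h1 : ∑ S ∈ Finset.univ.filter (fun S => m ∈ S), chat i S
        = ∑ S ∈ Finset.univ.filter (fun S => m ∈ S), c i S
          - ∑ S ∈ Finset.univ.filter (fun S => m ∈ S), β i S := by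
      rw [← Finset.sum_tsub_distrib _ (fun S _ => hβle i S)]
      exact Finset.sum_congr rfl fun S hS => by
        simp only [Finset.mem_filter] at hS
        rw [hchat' i S, if_pos hS.2]
    have h2 : ∑ S ∈ Finset.univ.filter (fun S => ¬ m ∈ S), chat i S
        = ∑ S ∈ Finset.univ.filter (fun S => ¬ m ∈ S), c i S
          + ∑ S ∈ Finset.univ.filter (fun S => m ∈ S), β i S := by
      have key : ∑ S ∈ Finset.univ.filter (fun S => ¬ m ∈ S), β i (insert m S)
          = ∑ S ∈ Finset.univ.filter (fun S => m ∈ S), β i S := by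
        have := ins_bij m (fun _ => True) (by simp) (β i)
        simpa using this
      rw [← key, ← Finset.sum_add_distrib]
      exact Finset.sum_congr rfl fun S hS => by
        simp only [Finset.mem_filter] at hS
        rw [hchat' i S, if_neg hS.2]
    have hle : ∑ S ∈ Finset.univ.filter (fun S => m ∈ S), β i S
        ≤ ∑ S ∈ Finset.univ.filter (fun S => m ∈ S), c i S :=
      Finset.sum_le_sum fun S _ => hβle i S
    omega
  constructor
  · -- ehat m = min (d m) (e m)
    rw [hehat]
    have hk : ∀ k : Fin K, ∑ S ∈ Finset.univ.filter (fun S => m ∈ S), chat k S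
        = (∑ S ∈ Finset.univ.filter (fun S => m ∈ S), c k S)
          - ∑ S : Finset (Fin K), β k S := by
      intro k
      have hfull : ∑ S : Finset (Fin K), β k S
          = ∑ S ∈ Finset.univ.filter (fun S => m ∈ S), β k S := by
        rw [← Finset.sum_filter_add_sum_filter_not Finset.univ (fun S => m ∈ S) (β k)]
        have : ∑ S ∈ Finset.univ.filter (fun S => ¬ m ∈ S), β k S = 0 :=
          Finset.sum_eq_zero fun S hS => by
            simp only [Finset.mem_filter] at hS
            exact hβzero k S hS.2
        omega
      rw [hfull, ← Finset.sum_tsub_distrib _ (fun S _ => hβle k S)]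
      exact Finset.sum_congr rfl fun S hS => by
        simp only [Finset.mem_filter] at hS
        rw [hchat' k S, if_pos hS.2]
    have hkle : ∀ k : Fin K, ∑ S : Finset (Fin K), β k S
        ≤ ∑ S ∈ Finset.univ.filter (fun S => m ∈ S), c k S := by
      intro k
      calc ∑ S : Finset (Fin K), β k S
          = ∑ S ∈ Finset.univ.filter (fun S => m ∈ S), β k S
            + ∑ S ∈ Finset.univ.filter (fun S => ¬ m ∈ S), β k S := by
            rw [Finset.sum_filter_add_sum_filter_not]
        _ = ∑ S ∈ Finset.univ.filter (fun S => m ∈ S), β k S := by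
            have : ∑ S ∈ Finset.univ.filter (fun S => ¬ m ∈ S), β k S = 0 :=
              Finset.sum_eq_zero fun S hS => by
                simp only [Finset.mem_filter] at hS
                exact hβzero k S hS.2
            omega
        _ ≤ _ := Finset.sum_le_sum fun S _ => hβle k S
    calc (∑ k : Fin K, ∑ S ∈ Finset.univ.filter (fun S => m ∈ S), chat k S)
        = ∑ k : Fin K, ((∑ S ∈ Finset.univ.filter (fun S => m ∈ S), c k S)
            - ∑ S : Finset (Fin K), β k S) := Finset.sum_congr rfl fun k _ => hk k
      _ = (∑ k : Fin K, ∑ S ∈ Finset.univ.filter (fun S => m ∈ S), c k S)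
            - ∑ k : Fin K, ∑ S : Finset (Fin K), β k S :=
          Finset.sum_tsub_distrib _ (fun k _ => hkle k)
      _ = e m - (e m - d m) := by rw [← he m, hβsum]
      _ = min (d m) (e m) := by omega
  · -- ehat m' = e m' for m' ≠ m
    intro m' hm'
    rw [hehat, he]
    apply Finset.sum_congr rfl
    intro k _
    rw [← Finset.sum_filter_add_sum_filter_not
          (Finset.univ.filter (fun S : Finset (Fin K) => m' ∈ S)) (fun S => m ∈ S) (chat k),
        ← Finset.sum_filter_add_sum_filter_not
          (Finset.univ.filter (fun S : Finset (Fin K) => m' ∈ S)) (fun S => m ∈ S) (c k)]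
    simp only [Finset.filter_filter]
    have hle : ∑ S ∈ Finset.univ.filter (fun S => m' ∈ S ∧ m ∈ S), β k S
        ≤ ∑ S ∈ Finset.univ.filter (fun S => m' ∈ S ∧ m ∈ S), c k S :=
      Finset.sum_le_sum fun S _ => hβle k S
    have h1 : ∑ S ∈ Finset.univ.filter (fun S => m' ∈ S ∧ m ∈ S), chat k S
        = ∑ S ∈ Finset.univ.filter (fun S => m' ∈ S ∧ m ∈ S), c k S
          - ∑ S ∈ Finset.univ.filter (fun S => m' ∈ S ∧ m ∈ S), β k S := by
      rw [← Finset.sum_tsub_distrib _ (fun S _ => hβle k S)]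
      exact Finset.sum_congr rfl fun S hS => by
        simp only [Finset.mem_filter] at hS
        rw [hchat' k S, if_pos hS.2.2]
    have h2 : ∑ S ∈ Finset.univ.filter (fun S => m' ∈ S ∧ ¬ m ∈ S), chat k S
        = ∑ S ∈ Finset.univ.filter (fun S => m' ∈ S ∧ ¬ m ∈ S), c k S
          + ∑ S ∈ Finset.univ.filter (fun S => m' ∈ S ∧ m ∈ S), β k S := by
      have hfe : Finset.univ.filter (fun S : Finset (Fin K) => m' ∈ S ∧ ¬ m ∈ S)
          = Finset.univ.filter (fun S => m ∉ S ∧ m' ∈ S) := by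
        ext S; simp [and_comm]
      have hfe2 : Finset.univ.filter (fun S : Finset (Fin K) => m' ∈ S ∧ m ∈ S)
          = Finset.univ.filter (fun S => m ∈ S ∧ m' ∈ S) := by
        ext S; simp [and_comm]
      have key : ∑ S ∈ Finset.univ.filter (fun S => m' ∈ S ∧ ¬ m ∈ S), β k (insert m S)
          = ∑ S ∈ Finset.univ.filter (fun S => m' ∈ S ∧ m ∈ S), β k S := by
        rw [hfe, hfe2]
        exact ins_bij m (fun S => m' ∈ S)
          (fun S _ => by simp [Finset.mem_insert, hm']) (β k)
      rw [← key, ← Finset.sum_add_distrib]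
      exact Finset.sum_congr rfl fun S hS => by
        simp only [Finset.mem_filter] at hS
        rw [hchat' k S, if_neg hS.2.2]
    omega
end

section
/- Claim 4 (Step 2 of the achievability proof): Fix m ∈ {1,…,K} and assume d_i ≥ e_i for all i ∈ {1,…,K}. Then there exist functions α and β assigning nonnegative integers to pairs (i,S), with i ∈ {1,…,K} and S ⊆ {1,…,K}, such that: α(i,S) ≤ c(i,S) and β(i,S) ≤ c(i,S) for all (i,S); α(i,S) = 0 unless (i = m and m ∉ S); ∑_{S ⊆ {1,…,K}} α(m,S) = d_m − e_m; β(i,S) = 0 unless (i ≠ m and i ∉ S); and for every m' ≠ m, ∑_{S : m' ∉ S} β(m',S) = ∑_{S : m ∉ S and m' ∈ S} α(m,S). -/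
lemma exists_subfun {ι : Type*} [DecidableEq ι] (s : Finset ι) (f : ι → ℕ) (n : ℕ)
    (hn : n ≤ ∑ x ∈ s, f x) :
    ∃ g : ι → ℕ, (∀ x, g x ≤ f x) ∧ (∀ x ∉ s, g x = 0) ∧ ∑ x ∈ s, g x = n := by
  induction s using Finset.induction_on generalizing n with
  | empty =>
    simp only [Finset.sum_empty, Nat.le_zero] at hn
    exact ⟨fun _ => 0, fun _ => Nat.zero_le _, fun _ _ => rfl, by simp [hn]⟩
  | @insert a s ha ih =>
    rw [Finset.sum_insert ha] at hn
    have h2 : n - min n (f a) ≤ ∑ x ∈ s, f x := by omega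
    obtain ⟨g, hg1, hg2, hg3⟩ := ih _ h2
    refine ⟨Function.update g a (min n (f a)), ?_, ?_, ?_⟩
    · intro x
      rcases eq_or_ne x a with rfl | hx
      · simp only [Function.update_self]; omega
      · simpa [Function.update_of_ne hx] using hg1 x
    · intro x hx
      simp only [Finset.mem_insert, not_or] at hx
      rw [Function.update_of_ne hx.1]
      exact hg2 x hx.2
    · rw [Finset.sum_insert ha, Function.update_self]
      have : ∑ x ∈ s, Function.update g a (min n (f a)) x = ∑ x ∈ s, g x := by
        refine Finset.sum_congr rfl fun x hx => ?_
        have hxa : x ≠ a := fun h => ha (h ▸ hx)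
        exact Function.update_of_ne hxa _ _
      rw [this, hg3]; omega

/-- Claim 4, Step 2 of the achievability proof. -/
theorem claim4_existence_of_alpha_beta
    {K : ℕ} (hK : 2 ≤ K) (c : Fin K → Finset (Fin K) → ℕ)
    (d e : Fin K → ℕ)
    (hd : ∀ i, d i = ∑ S : Finset (Fin K), c i S)
    (he : ∀ i, e i = ∑ k : Fin K,
      ∑ S ∈ Finset.univ.filter (fun S : Finset (Fin K) => i ∈ S), c k S)
    (m : Fin K) (hde : ∀ i, e i ≤ d i) :
    ∃ α β : Fin K → Finset (Fin K) → ℕ,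
      (∀ i S, α i S ≤ c i S) ∧ (∀ i S, β i S ≤ c i S) ∧
      (∀ i S, ¬(i = m ∧ m ∉ S) → α i S = 0) ∧
      (∑ S : Finset (Fin K), α m S = d m - e m) ∧
      (∀ i S, ¬(i ≠ m ∧ i ∉ S) → β i S = 0) ∧
      (∀ m', m' ≠ m →
        ∑ S ∈ Finset.univ.filter (fun S : Finset (Fin K) => m' ∉ S), β m' S =
        ∑ S ∈ Finset.univ.filter (fun S : Finset (Fin K) => m ∉ S ∧ m' ∈ S), α m S) := by
  classical
  have hsplit : ∀ i : Fin K,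
      (∑ S ∈ Finset.univ.filter (fun S : Finset (Fin K) => i ∈ S), c i S) +
      (∑ S ∈ Finset.univ.filter (fun S : Finset (Fin K) => i ∉ S), c i S) = d i := by
    intro i
    rw [hd i]
    exact Finset.sum_filter_add_sum_filter_not _ _ _
  -- construct α
  have hα : d m - e m ≤ ∑ S ∈ Finset.univ.filter (fun S : Finset (Fin K) => m ∉ S), c m S := by
    have h1 := hsplit m
    have h2 : (∑ S ∈ Finset.univ.filter (fun S : Finset (Fin K) => m ∈ S), c m S) ≤ e m := by
      rw [he m]
      exact Finset.single_le_sum (f := fun k =>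
        ∑ S ∈ Finset.univ.filter (fun S : Finset (Fin K) => m ∈ S), c k S)
        (fun _ _ => Nat.zero_le _) (Finset.mem_univ m)
    omega
  obtain ⟨g, hg1, hg2, hg3⟩ := exists_subfun _ (c m) (d m - e m) hα
  set α : Fin K → Finset (Fin K) → ℕ := fun i S => if i = m then g S else 0 with hαdef
  have hαle : ∀ i S, α i S ≤ c i S := by
    intro i S
    simp only [hαdef]
    split
    · next h => exact h ▸ hg1 S
    · exact Nat.zero_le _
  -- construct β, one row per m' ≠ m
  have key : ∀ m' : Fin K, m' ≠ m → ∃ h : Finset (Fin K) → ℕ,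
      (∀ S, h S ≤ c m' S) ∧
      (∀ S, S ∉ Finset.univ.filter (fun S : Finset (Fin K) => m' ∉ S) → h S = 0) ∧
      ∑ S ∈ Finset.univ.filter (fun S : Finset (Fin K) => m' ∉ S), h S =
        ∑ S ∈ Finset.univ.filter (fun S : Finset (Fin K) => m ∉ S ∧ m' ∈ S), α m S := by
    intro m' hm'
    apply exists_subfun
    -- bound the target by the available budget
    have hA1 : (∑ S ∈ Finset.univ.filter (fun S : Finset (Fin K) => m ∉ S ∧ m' ∈ S), α m S)
        ≤ ∑ S ∈ Finset.univ.filter (fun S : Finset (Fin K) => m' ∈ S), c m S := by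
      refine le_trans (Finset.sum_le_sum fun S _ => hαle m S) ?_
      refine Finset.sum_le_sum_of_subset ?_
      intro S hS
      simp only [Finset.mem_filter] at *
      exact ⟨hS.1, hS.2.2⟩
    have hA2 : (∑ S ∈ Finset.univ.filter (fun S : Finset (Fin K) => m' ∈ S), c m S) +
        (∑ S ∈ Finset.univ.filter (fun S : Finset (Fin K) => m' ∈ S), c m' S) ≤ e m' := by
      rw [he m']
      have hpair : ({m, m'} : Finset (Fin K)) ⊆ Finset.univ := Finset.subset_univ _
      calc _ = ∑ k ∈ ({m, m'} : Finset (Fin K)),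
            ∑ S ∈ Finset.univ.filter (fun S : Finset (Fin K) => m' ∈ S), c k S :=
            (Finset.sum_pair hm'.symm).symm
        _ ≤ _ := Finset.sum_le_sum_of_subset hpair
    have h1 := hsplit m'
    have h3 := hde m'
    omega
  choose h hh1 hh2 hh3 using key
  refine ⟨α, fun i S => if hi : i = m then 0 else h i hi S, hαle, ?_, ?_, ?_, ?_, ?_⟩
  · intro i S
    dsimp only
    split
    · exact Nat.zero_le _
    · exact hh1 i _ S
  · intro i S hiS
    simp only [hαdef]
    split
    · next hi =>
      have hmS : m ∈ S := by tauto
      exact hg2 S (by simp [hmS])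
    · rfl
  · have h1 : ∀ S : Finset (Fin K), α m S = g S := fun S => by simp [hαdef]
    calc ∑ S : Finset (Fin K), α m S = ∑ S : Finset (Fin K), g S :=
          Finset.sum_congr rfl fun S _ => h1 S
      _ = ∑ S ∈ Finset.univ.filter (fun S : Finset (Fin K) => m ∉ S), g S :=
          (Finset.sum_subset (Finset.filter_subset _ _) fun S _ hS => hg2 S hS).symm
      _ = d m - e m := hg3
  · intro i S hiS
    rcases Decidable.em (i = m) with hi | hi
    · simp [hi]
    · have hiS' : i ∈ S := by tauto
      dsimp only
      rw [dif_neg hi]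
      exact hh2 i hi S (by simp [hiS'])
  · intro m' hm'
    have : ∑ S ∈ Finset.univ.filter (fun S : Finset (Fin K) => m' ∉ S),
        (if hi : m' = m then 0 else h m' hi S) =
        ∑ S ∈ Finset.univ.filter (fun S : Finset (Fin K) => m' ∉ S), h m' hm' S :=
      Finset.sum_congr rfl fun S _ => by rw [dif_neg hm']
    rw [this, hh3 m' hm']
end

section
/- Claim 5 (coefficient identities for Step 2): Define d̂_i := ∑_{S ⊆ {1,…,K}} ĉ(i,S) and ê_i := ∑_{k=1}^{K} ∑_{S ⊆ {1,…,K} : i ∈ S} ĉ(k,S). Then d̂_m = e_m, ê_m = e_m, and for every m' ≠ m one has d̂_{m'} = d_{m'} and ê_{m'} = e_{m'}. -/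
open Finset

/-- Key bijection: summing `g (S.erase k)` over sets containing `k` (with a
predicate invariant under inserting `k`) equals summing `g S` over sets not
containing `k`. -/
lemma erase_sum_aux {K : ℕ} (k : Fin K) (P : Finset (Fin K) → Prop) [DecidablePred P]
    (hP : ∀ S : Finset (Fin K), k ∉ S → (P (insert k S) ↔ P S)) (g : Finset (Fin K) → ℕ) :
    ∑ S ∈ Finset.univ.filter (fun S => P S ∧ k ∈ S), g (S.erase k)
      = ∑ S ∈ Finset.univ.filter (fun S => P S ∧ k ∉ S), g S := by
  apply Finset.sum_nbij' (fun S => S.erase k) (fun S => insert k S)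
  · intro S hS
    simp only [mem_filter, mem_univ, true_and] at hS ⊢
    refine ⟨?_, Finset.notMem_erase k S⟩
    have h := hP (S.erase k) (Finset.notMem_erase k S)
    rw [Finset.insert_erase hS.2] at h
    exact h.mp hS.1
  · intro S hS
    simp only [mem_filter, mem_univ, true_and] at hS ⊢
    exact ⟨(hP S hS.2).mpr hS.1, Finset.mem_insert_self k S⟩
  · intro S hS
    simp only [mem_filter, mem_univ, true_and] at hS
    exact Finset.insert_erase hS.2
  · intro S hS
    simp only [mem_filter, mem_univ, true_and] at hS
    exact Finset.erase_insert hS.2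
  · intro S _
    rfl

/-- Claim 5, coefficient identities for Step 2. -/
theorem claim5_coefficient_identities
    {K : ℕ} (hK : 2 ≤ K) (c : Fin K → Finset (Fin K) → ℕ)
    (d e : Fin K → ℕ)
    (hd : ∀ i, d i = ∑ S : Finset (Fin K), c i S)
    (he : ∀ i, e i = ∑ k : Fin K,
      ∑ S ∈ Finset.univ.filter (fun S : Finset (Fin K) => i ∈ S), c k S)
    (m : Fin K) (hde : ∀ i, e i ≤ d i)
    (α β : Fin K → Finset (Fin K) → ℕ)
    (hαle : ∀ i S, α i S ≤ c i S) (hβle : ∀ i S, β i S ≤ c i S)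
    (hα0 : ∀ i S, ¬(i = m ∧ m ∉ S) → α i S = 0)
    (hαsum : ∑ S : Finset (Fin K), α m S = d m - e m)
    (hβ0 : ∀ i S, ¬(i ≠ m ∧ i ∉ S) → β i S = 0)
    (hβsum : ∀ m', m' ≠ m →
      ∑ S ∈ Finset.univ.filter (fun S : Finset (Fin K) => m' ∉ S), β m' S =
      ∑ S ∈ Finset.univ.filter (fun S : Finset (Fin K) => m ∉ S ∧ m' ∈ S), α m S)
    (chat : Fin K → Finset (Fin K) → ℕ)
    (hchat : ∀ i S, chat i S =
      if i = m then (if m ∈ S then c i S else c i S - α m S)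
      else (if i ∈ S then c i S + β i (S.erase i) else c i S - β i S))
    (dhat ehat : Fin K → ℕ)
    (hdhat : ∀ i, dhat i = ∑ S : Finset (Fin K), chat i S)
    (hehat : ∀ i, ehat i = ∑ k : Fin K,
      ∑ S ∈ Finset.univ.filter (fun S : Finset (Fin K) => i ∈ S), chat k S) :
    dhat m = e m ∧ ehat m = e m ∧
      (∀ m', m' ≠ m → dhat m' = d m' ∧ ehat m' = e m') := by
  classical
  -- general split of a sum over univ into S ∋ k and S ∌ k
  have split : ∀ (f : Finset (Fin K) → ℕ) (k : Fin K),
      ∑ S : Finset (Fin K), f S =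
        ∑ S ∈ Finset.univ.filter (fun S => k ∈ S), f S +
        ∑ S ∈ Finset.univ.filter (fun S => k ∉ S), f S := by
    intro f k
    exact (Finset.sum_filter_add_sum_filter_not _ _ _).symm
  -- split of a filtered sum into further k∈S / k∉S
  have split2 : ∀ (f : Finset (Fin K) → ℕ) (P : Finset (Fin K) → Prop)
      [DecidablePred P] (k : Fin K),
      ∑ S ∈ Finset.univ.filter (fun S => P S), f S =
        ∑ S ∈ Finset.univ.filter (fun S => P S ∧ k ∈ S), f S +
        ∑ S ∈ Finset.univ.filter (fun S => P S ∧ k ∉ S), f S := by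
    intro f P _ k
    rw [← Finset.sum_filter_add_sum_filter_not (Finset.univ.filter fun S => P S)
      (fun S => k ∈ S) f]
    rw [Finset.filter_filter, Finset.filter_filter]
  -- dhat m = e m
  have hdm : dhat m = e m := by
    have h1 : ∑ S ∈ Finset.univ.filter (fun S : Finset (Fin K) => m ∉ S), α m S
        = d m - e m := by
      rw [← hαsum, split (α m) m]
      have : ∑ S ∈ Finset.univ.filter (fun S : Finset (Fin K) => m ∈ S), α m S = 0 := by
        apply Finset.sum_eq_zero
        intro S hS
        simp only [mem_filter, mem_univ, true_and] at hS
        exact hα0 m S (by simp [hS])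
      omega
    have h2 : ∑ S ∈ Finset.univ.filter (fun S : Finset (Fin K) => m ∉ S), α m S
        ≤ ∑ S ∈ Finset.univ.filter (fun S : Finset (Fin K) => m ∉ S), c m S :=
      Finset.sum_le_sum fun S _ => hαle m S
    rw [hdhat, split (chat m) m]
    have e1 : ∑ S ∈ Finset.univ.filter (fun S : Finset (Fin K) => m ∈ S), chat m S
        = ∑ S ∈ Finset.univ.filter (fun S : Finset (Fin K) => m ∈ S), c m S := by
      apply Finset.sum_congr rfl
      intro S hS
      simp only [mem_filter, mem_univ, true_and] at hS
      rw [hchat]; simp [hS]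
    have e2 : ∑ S ∈ Finset.univ.filter (fun S : Finset (Fin K) => m ∉ S), chat m S
        = ∑ S ∈ Finset.univ.filter (fun S : Finset (Fin K) => m ∉ S), c m S -
          ∑ S ∈ Finset.univ.filter (fun S : Finset (Fin K) => m ∉ S), α m S := by
      rw [← Finset.sum_tsub_distrib _ (fun S _ => hαle m S)]
      apply Finset.sum_congr rfl
      intro S hS
      simp only [mem_filter, mem_univ, true_and] at hS
      rw [hchat]; simp [hS]
    rw [e1, e2]
    have hdsplit := split (c m) m
    have hd' := hd m
    have hde' := hde m
    omega
  -- dhat m' = d m' for m' ≠ m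
  have hdm' : ∀ m', m' ≠ m → dhat m' = d m' := by
    intro m' hm'
    rw [hdhat, split (chat m') m']
    have e1 : ∑ S ∈ Finset.univ.filter (fun S : Finset (Fin K) => m' ∈ S), chat m' S
        = ∑ S ∈ Finset.univ.filter (fun S : Finset (Fin K) => m' ∈ S), c m' S +
          ∑ S ∈ Finset.univ.filter (fun S : Finset (Fin K) => m' ∈ S), β m' (S.erase m') := by
      rw [← Finset.sum_add_distrib]
      apply Finset.sum_congr rfl
      intro S hS
      simp only [mem_filter, mem_univ, true_and] at hS
      rw [hchat]; simp [hS, hm']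
    have e2 : ∑ S ∈ Finset.univ.filter (fun S : Finset (Fin K) => m' ∉ S), chat m' S
        = ∑ S ∈ Finset.univ.filter (fun S : Finset (Fin K) => m' ∉ S), c m' S -
          ∑ S ∈ Finset.univ.filter (fun S : Finset (Fin K) => m' ∉ S), β m' S := by
      rw [← Finset.sum_tsub_distrib _ (fun S _ => hβle m' S)]
      apply Finset.sum_congr rfl
      intro S hS
      simp only [mem_filter, mem_univ, true_and] at hS
      rw [hchat]; simp [hS, hm']
    have key : ∑ S ∈ Finset.univ.filter (fun S : Finset (Fin K) => m' ∈ S), β m' (S.erase m')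
        = ∑ S ∈ Finset.univ.filter (fun S : Finset (Fin K) => m' ∉ S), β m' S := by
      have := erase_sum_aux m' (fun _ => True) (fun S _ => Iff.rfl) (β m')
      simpa using this
    have hle : ∑ S ∈ Finset.univ.filter (fun S : Finset (Fin K) => m' ∉ S), β m' S
        ≤ ∑ S ∈ Finset.univ.filter (fun S : Finset (Fin K) => m' ∉ S), c m' S :=
      Finset.sum_le_sum fun S _ => hβle m' S
    rw [e1, e2, key]
    have hdsplit := split (c m') m'
    have hd' := hd m'
    omega
  -- inner sums for ehat: for k ≠ m and k ≠ i, the chat inner sum equals the c inner sum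
  have inner_eq : ∀ (i k : Fin K), k ≠ m → k ≠ i →
      ∑ S ∈ Finset.univ.filter (fun S : Finset (Fin K) => i ∈ S), chat k S =
      ∑ S ∈ Finset.univ.filter (fun S : Finset (Fin K) => i ∈ S), c k S := by
    intro i k hkm hki
    rw [split2 (chat k) (fun S => i ∈ S) k, split2 (c k) (fun S => i ∈ S) k]
    have e1 : ∑ S ∈ Finset.univ.filter (fun S : Finset (Fin K) => i ∈ S ∧ k ∈ S), chat k S
        = ∑ S ∈ Finset.univ.filter (fun S : Finset (Fin K) => i ∈ S ∧ k ∈ S), c k S +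
          ∑ S ∈ Finset.univ.filter (fun S : Finset (Fin K) => i ∈ S ∧ k ∈ S),
            β k (S.erase k) := by
      rw [← Finset.sum_add_distrib]
      apply Finset.sum_congr rfl
      intro S hS
      simp only [mem_filter, mem_univ, true_and] at hS
      rw [hchat]; simp [hS.1, hS.2, hkm]
    have e2 : ∑ S ∈ Finset.univ.filter (fun S : Finset (Fin K) => i ∈ S ∧ k ∉ S), chat k S
        = ∑ S ∈ Finset.univ.filter (fun S : Finset (Fin K) => i ∈ S ∧ k ∉ S), c k S -
          ∑ S ∈ Finset.univ.filter (fun S : Finset (Fin K) => i ∈ S ∧ k ∉ S), β k S := by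
      rw [← Finset.sum_tsub_distrib _ (fun S _ => hβle k S)]
      apply Finset.sum_congr rfl
      intro S hS
      simp only [mem_filter, mem_univ, true_and] at hS
      rw [hchat]; simp [hS.1, hS.2, hkm]
    have key : ∑ S ∈ Finset.univ.filter (fun S : Finset (Fin K) => i ∈ S ∧ k ∈ S),
          β k (S.erase k)
        = ∑ S ∈ Finset.univ.filter (fun S : Finset (Fin K) => i ∈ S ∧ k ∉ S), β k S := by
      exact erase_sum_aux k (fun S => i ∈ S)
        (fun S _ => by
          simp only [Finset.mem_insert]
          exact or_iff_right (fun h => hki h.symm)) (β k)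
    have hle : ∑ S ∈ Finset.univ.filter (fun S : Finset (Fin K) => i ∈ S ∧ k ∉ S), β k S
        ≤ ∑ S ∈ Finset.univ.filter (fun S : Finset (Fin K) => i ∈ S ∧ k ∉ S), c k S :=
      Finset.sum_le_sum fun S _ => hβle k S
    omega
  -- ehat m = e m
  have hem : ehat m = e m := by
    rw [hehat, he]
    apply Finset.sum_congr rfl
    intro k _
    by_cases hk : k = m
    · subst hk
      apply Finset.sum_congr rfl
      intro S hS
      simp only [mem_filter, mem_univ, true_and] at hS
      rw [hchat]; simp [hS]
    · exact inner_eq m k hk hk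
  -- ehat m' = e m' for m' ≠ m
  have hem' : ∀ m', m' ≠ m → ehat m' = e m' := by
    intro m' hm'
    rw [hehat, he]
    -- term k = m
    have tm : ∑ S ∈ Finset.univ.filter (fun S : Finset (Fin K) => m' ∈ S), chat m S
        = ∑ S ∈ Finset.univ.filter (fun S : Finset (Fin K) => m' ∈ S), c m S -
          ∑ S ∈ Finset.univ.filter (fun S : Finset (Fin K) => m ∉ S ∧ m' ∈ S), α m S := by
      rw [split2 (chat m) (fun S => m' ∈ S) m, split2 (c m) (fun S => m' ∈ S) m]
      have e1 : ∑ S ∈ Finset.univ.filter (fun S : Finset (Fin K) => m' ∈ S ∧ m ∈ S), chat m S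
          = ∑ S ∈ Finset.univ.filter (fun S : Finset (Fin K) => m' ∈ S ∧ m ∈ S), c m S := by
        apply Finset.sum_congr rfl
        intro S hS
        simp only [mem_filter, mem_univ, true_and] at hS
        rw [hchat]; simp [hS.2]
      have e2 : ∑ S ∈ Finset.univ.filter (fun S : Finset (Fin K) => m' ∈ S ∧ m ∉ S), chat m S
          = ∑ S ∈ Finset.univ.filter (fun S : Finset (Fin K) => m' ∈ S ∧ m ∉ S), c m S -
            ∑ S ∈ Finset.univ.filter (fun S : Finset (Fin K) => m' ∈ S ∧ m ∉ S), α m S := by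
        rw [← Finset.sum_tsub_distrib _ (fun S _ => hαle m S)]
        apply Finset.sum_congr rfl
        intro S hS
        simp only [mem_filter, mem_univ, true_and] at hS
        rw [hchat]; simp [hS.2]
      have hfe : Finset.univ.filter (fun S : Finset (Fin K) => m ∉ S ∧ m' ∈ S)
          = Finset.univ.filter (fun S : Finset (Fin K) => m' ∈ S ∧ m ∉ S) := by
        apply Finset.filter_congr
        intro S _
        exact and_comm
      have hle : ∑ S ∈ Finset.univ.filter (fun S : Finset (Fin K) => m' ∈ S ∧ m ∉ S), α m S
          ≤ ∑ S ∈ Finset.univ.filter (fun S : Finset (Fin K) => m' ∈ S ∧ m ∉ S), c m S :=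
        Finset.sum_le_sum fun S _ => hαle m S
      rw [hfe, e1, e2]
      omega
    -- term k = m'
    have tm' : ∑ S ∈ Finset.univ.filter (fun S : Finset (Fin K) => m' ∈ S), chat m' S
        = ∑ S ∈ Finset.univ.filter (fun S : Finset (Fin K) => m' ∈ S), c m' S +
          ∑ S ∈ Finset.univ.filter (fun S : Finset (Fin K) => m ∉ S ∧ m' ∈ S), α m S := by
      have e1 : ∑ S ∈ Finset.univ.filter (fun S : Finset (Fin K) => m' ∈ S), chat m' S
          = ∑ S ∈ Finset.univ.filter (fun S : Finset (Fin K) => m' ∈ S), c m' S +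
            ∑ S ∈ Finset.univ.filter (fun S : Finset (Fin K) => m' ∈ S),
              β m' (S.erase m') := by
        rw [← Finset.sum_add_distrib]
        apply Finset.sum_congr rfl
        intro S hS
        simp only [mem_filter, mem_univ, true_and] at hS
        rw [hchat]; simp [hS, hm']
      have key : ∑ S ∈ Finset.univ.filter (fun S : Finset (Fin K) => m' ∈ S),
            β m' (S.erase m')
          = ∑ S ∈ Finset.univ.filter (fun S : Finset (Fin K) => m' ∉ S), β m' S := by
        have := erase_sum_aux m' (fun _ => True) (fun S _ => Iff.rfl) (β m')
        simpa using this
      rw [e1, key, hβsum m' hm']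
    -- combine: sum over k of inner sums
    have hrest : ∀ k : Fin K, k ≠ m → k ≠ m' →
        ∑ S ∈ Finset.univ.filter (fun S : Finset (Fin K) => m' ∈ S), chat k S =
        ∑ S ∈ Finset.univ.filter (fun S : Finset (Fin K) => m' ∈ S), c k S :=
      fun k hk1 hk2 => inner_eq m' k hk1 hk2
    -- split the outer sums over k at m and m'
    have hmm' : m ≠ m' := fun h => hm' h.symm
    have hm'mem : m' ∈ Finset.univ.erase m := by simp [hm']
    have split3 : ∀ (F : Fin K → ℕ), ∑ k : Fin K, F k =
        (∑ k ∈ (Finset.univ.erase m).erase m', F k) + F m' + F m := by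
      intro F
      rw [Finset.sum_erase_add _ _ hm'mem, Finset.sum_erase_add _ _ (Finset.mem_univ m)]
    have L : (∑ k : Fin K, ∑ S ∈ Finset.univ.filter
          (fun S : Finset (Fin K) => m' ∈ S), chat k S)
        = (∑ k ∈ (Finset.univ.erase m).erase m', ∑ S ∈ Finset.univ.filter
            (fun S : Finset (Fin K) => m' ∈ S), chat k S)
          + (∑ S ∈ Finset.univ.filter (fun S : Finset (Fin K) => m' ∈ S), chat m' S)
          + (∑ S ∈ Finset.univ.filter (fun S : Finset (Fin K) => m' ∈ S), chat m S) :=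
      split3 _
    have R : (∑ k : Fin K, ∑ S ∈ Finset.univ.filter
          (fun S : Finset (Fin K) => m' ∈ S), c k S)
        = (∑ k ∈ (Finset.univ.erase m).erase m', ∑ S ∈ Finset.univ.filter
            (fun S : Finset (Fin K) => m' ∈ S), c k S)
          + (∑ S ∈ Finset.univ.filter (fun S : Finset (Fin K) => m' ∈ S), c m' S)
          + (∑ S ∈ Finset.univ.filter (fun S : Finset (Fin K) => m' ∈ S), c m S) :=
      split3 _
    have hα_le : ∑ S ∈ Finset.univ.filter (fun S : Finset (Fin K) => m ∉ S ∧ m' ∈ S), α m S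
        ≤ ∑ S ∈ Finset.univ.filter (fun S : Finset (Fin K) => m' ∈ S), c m S := by
      calc ∑ S ∈ Finset.univ.filter (fun S : Finset (Fin K) => m ∉ S ∧ m' ∈ S), α m S
          ≤ ∑ S ∈ Finset.univ.filter (fun S : Finset (Fin K) => m ∉ S ∧ m' ∈ S), c m S :=
            Finset.sum_le_sum fun S _ => hαle m S
        _ ≤ ∑ S ∈ Finset.univ.filter (fun S : Finset (Fin K) => m' ∈ S), c m S := by
            apply Finset.sum_le_sum_of_subset
            intro S hS
            simp only [mem_filter, mem_univ, true_and] at hS ⊢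
            exact hS.2
    have hrest_eq : ∑ k ∈ (Finset.univ.erase m).erase m',
          ∑ S ∈ Finset.univ.filter (fun S : Finset (Fin K) => m' ∈ S), chat k S
        = ∑ k ∈ (Finset.univ.erase m).erase m',
          ∑ S ∈ Finset.univ.filter (fun S : Finset (Fin K) => m' ∈ S), c k S := by
      apply Finset.sum_congr rfl
      intro k hk
      simp only [Finset.mem_erase, Finset.mem_univ, and_true] at hk
      exact hrest k hk.2 hk.1
    rw [L, R, hrest_eq, tm, tm']
    omega
  exact ⟨hdm, hem, fun m' h => ⟨hdm' m' h, hem' m' h⟩⟩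
end
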